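/- The function χ̃(s) = ∫₀^s √(ψ'(t)) dt is odd, strictly increasing, and is a bijection from ℝ onto ℝ. -/

import Mathlib

/-- The derivative ψ'(s) = 1/((1+ln(1+|s|))²(1+|s|)). -/
noncomputable def psi' (s : ℝ) : ℝ :=
  1 / ((1 + Real.log (1 + |s|)) ^ 2 * (1 + |s|))

/-- χ̃(s) = ∫₀^s √(ψ'(t)) dt. -/
noncomputable def chit (s : ℝ) : ℝ :=
  ∫ t in (0:ℝ)..s, Real.sqrt (psi' t)

open Real intervalIntegral Filter

lemma log_nonneg' (s : ℝ) : 0 ≤ Real.log (1 + |s|) :=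
  Real.log_nonneg (by simp [abs_nonneg])

lemma psi'_pos (s : ℝ) : 0 < psi' s := by
  have h1 : (0:ℝ) < 1 + Real.log (1 + |s|) := by linarith [log_nonneg' s]
  have h2 : (0:ℝ) < 1 + |s| := by positivity
  exact div_pos one_pos (by positivity)

lemma cont_f : Continuous fun t => Real.sqrt (psi' t) := by
  have h2 : Continuous fun s : ℝ => 1 + |s| := by continuity
  have hlog : Continuous fun s : ℝ => Real.log (1 + |s|) :=
    h2.log (fun s => by positivity)
  apply Continuous.sqrt
  unfold psi'
  apply Continuous.div continuous_const (by fun_prop)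
  intro s
  have h1 : (0:ℝ) < 1 + Real.log (1 + |s|) := by linarith [log_nonneg' s]
  positivity

lemma f_pos (t : ℝ) : 0 < Real.sqrt (psi' t) := Real.sqrt_pos.2 (psi'_pos t)

lemma intble (a b : ℝ) : IntervalIntegrable (fun t => Real.sqrt (psi' t)) MeasureTheory.volume a b :=
  cont_f.intervalIntegrable a b

lemma chit_odd (s : ℝ) : chit (-s) = - chit s := by
  have heven : ∀ t : ℝ, Real.sqrt (psi' (-t)) = Real.sqrt (psi' t) := by
    intro t; simp [psi', abs_neg]
  unfold chit
  have h := intervalIntegral.integral_comp_neg (a := (0:ℝ)) (b := -s)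
    (f := fun t => Real.sqrt (psi' t))
  simp_rw [heven, neg_neg, neg_zero] at h
  rw [h, intervalIntegral.integral_symm]

lemma chit_mono : StrictMono chit := by
  intro a b hab
  have h : chit a + ∫ t in a..b, Real.sqrt (psi' t) = chit b :=
    intervalIntegral.integral_add_adjacent_intervals (intble 0 a) (intble a b)
  have hpos : 0 < ∫ t in a..b, Real.sqrt (psi' t) :=
    intervalIntegral_pos_of_pos (intble a b) f_pos hab
  linarith

lemma chit_lower (s : ℝ) (hs : 0 ≤ s) : (1/2) * Real.log (1 + s) ≤ chit s := by
  have hg : ∀ t ∈ Set.uIcc (0:ℝ) s, HasDerivAt (fun x => (1/2) * Real.log (1 + x))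
      ((2 * (1 + t))⁻¹) t := by
    intro t ht
    rw [Set.uIcc_of_le hs] at ht
    have h1 : (0:ℝ) < 1 + t := by linarith [ht.1]
    have := ((hasDerivAt_id t).const_add 1).log (ne_of_gt h1)
    have h := this.const_mul (1/2 : ℝ)
    convert h using 1
    · rfl
    · rfl
    · rfl
    · simp only [id, one_div, mul_inv]
  have hgi : IntervalIntegrable (fun t => (2 * (1 + t))⁻¹) MeasureTheory.volume 0 s := by
    apply ContinuousOn.intervalIntegrable
    apply ContinuousOn.inv₀ (by fun_prop)
    intro t ht
    rw [Set.uIcc_of_le hs] at ht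
    have : (0:ℝ) < 1 + t := by linarith [ht.1]
    positivity
  have heq : (∫ t in (0:ℝ)..s, (2 * (1 + t))⁻¹) = (1/2) * Real.log (1 + s) := by
    rw [intervalIntegral.integral_eq_sub_of_hasDerivAt hg hgi]
    simp
  rw [← heq]
  apply intervalIntegral.integral_mono_on hs hgi (intble 0 s)
  intro t ht
  have ht0 : 0 ≤ t := ht.1
  have h1 : (0:ℝ) < 1 + t := by linarith
  have habs : |t| = t := abs_of_nonneg ht0
  have hlog : Real.log (1 + t) ≤ 2 * (Real.sqrt (1 + t) - 1) := by
    have hsq : Real.sqrt (1 + t) ^ 2 = 1 + t := Real.sq_sqrt h1.le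
    have hspos : 0 < Real.sqrt (1 + t) := Real.sqrt_pos.2 h1
    calc Real.log (1 + t) = 2 * Real.log (Real.sqrt (1 + t)) := by
          rw [Real.log_sqrt h1.le]; ring
      _ ≤ 2 * (Real.sqrt (1 + t) - 1) := by
          have := Real.log_le_sub_one_of_pos hspos
          linarith
  rw [Real.le_sqrt (by positivity) (psi'_pos t).le]
  rw [psi', habs]
  have ha : (0:ℝ) < 1 + Real.log (1 + t) := by
    have := Real.log_nonneg (by linarith : (1:ℝ) ≤ 1 + t); linarith
  have h2s : (1 + Real.log (1 + t)) ^ 2 ≤ 4 * (1 + t) := by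
    nlinarith [Real.sq_sqrt h1.le, Real.sqrt_nonneg (1 + t)]
  rw [← one_div, div_pow, one_pow]
  apply one_div_le_one_div_of_le (mul_pos (pow_pos ha 2) h1)
  nlinarith

theorem stmt_10 :
    (∀ s : ℝ, chit (-s) = - chit s) ∧
    StrictMono chit ∧
    Function.Bijective chit := by
  refine ⟨chit_odd, chit_mono, chit_mono.injective, ?_⟩
  have hcont : Continuous chit := intervalIntegral.continuous_primitive (fun a b => intble a b) 0
  have htop : Tendsto chit atTop atTop := by
    have hl : Tendsto (fun s : ℝ => (1/2) * Real.log (1 + s)) atTop atTop :=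
      (Real.tendsto_log_atTop.comp
        (tendsto_atTop_add_const_left _ 1 tendsto_id)).const_mul_atTop (by norm_num)
    apply tendsto_atTop_mono' atTop _ hl
    filter_upwards [eventually_ge_atTop (0:ℝ)] with s hs using chit_lower s hs
  have hbot : Tendsto chit atBot atBot := by
    have := htop.comp tendsto_neg_atBot_atTop
    have h2 : ∀ s, chit s = - chit (-s) := fun s => by rw [chit_odd]; ring
    rw [show chit = (fun s => - chit (-s)) from funext h2]
    exact (tendsto_neg_atTop_atBot.comp this)
  exact hcont.surjective htop hbot
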